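/- For every nonempty finite set X and every nontrivial upper set F ⊆ 2^X, one has q(F) ≤ p_c(F) ≤ 8 · q(F) · log₂(2 ℓ_0(F)). -/

import Mathlib

open Finset

noncomputable section

/-- Product measure weight of a single subset `S` of the finite type `X`. -/
def mu {X : Type*} [Fintype X] [DecidableEq X] (p : ℝ) (S : Finset X) : ℝ :=
  p ^ S.card * (1 - p) ^ (Fintype.card X - S.card)

/-- Measure of a family of subsets. -/
def muF {X : Type*} [Fintype X] [DecidableEq X] (p : ℝ) (F : Finset (Finset X)) : ℝ :=
  ∑ S ∈ F, mu p S

/-- `F` is an upper set (increasing family) in `2^X`. -/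
def IsUpperFam {X : Type*} [Fintype X] [DecidableEq X] (F : Finset (Finset X)) : Prop :=
  ∀ S ∈ F, ∀ T : Finset X, S ⊆ T → T ∈ F

/-- `G` is a cover of `F`: every member of `F` contains a member of `G`. -/
def IsCover {X : Type*} [Fintype X] [DecidableEq X] (G F : Finset (Finset X)) : Prop :=
  ∀ S ∈ F, ∃ T ∈ G, T ⊆ S

/-- `F` is `p`-small. -/
def PSmall {X : Type*} [Fintype X] [DecidableEq X] (p : ℝ) (F : Finset (Finset X)) : Prop :=
  ∃ G : Finset (Finset X), IsCover G F ∧ ∑ T ∈ G, p ^ T.card ≤ 1 / 2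

/-- Expectation threshold: the largest `p ∈ [0,1]` for which `F` is `p`-small. -/
def qThr {X : Type*} [Fintype X] [DecidableEq X] (F : Finset (Finset X)) : ℝ :=
  sSup {p : ℝ | p ∈ Set.Icc (0 : ℝ) 1 ∧ PSmall p F}

/-- The set of minimal elements of `F` (under inclusion). -/
def minimalsF {X : Type*} [Fintype X] [DecidableEq X] (F : Finset (Finset X)) :
    Finset (Finset X) :=
  F.filter fun S => ∀ T ∈ F, T ⊆ S → T = S

/-- `ℓ₀(F)`: maximum size of a minimal element of `F`. -/
def ell0 {X : Type*} [Fintype X] [DecidableEq X] (F : Finset (Finset X)) : ℕ :=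
  (minimalsF F).sup Finset.card

/-- `ℓ(F) = max (ℓ₀(F), 2)`. -/
def ell {X : Type*} [Fintype X] [DecidableEq X] (F : Finset (Finset X)) : ℕ :=
  max (ell0 F) 2

/-- The upper set generated by a family `A`. -/
def upClos {X : Type*} [Fintype X] [DecidableEq X] (A : Finset (Finset X)) :
    Finset (Finset X) :=
  Finset.univ.filter fun T => ∃ S ∈ A, S ⊆ T

/-- The ratio `r_{A,B}(p) = (μ_p(A)/μ_p(⟨A⟩)) / μ_p(B)`. -/
def rAB {X : Type*} [Fintype X] [DecidableEq X] (A B : Finset (Finset X)) (p : ℝ) : ℝ :=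
  (muF p A / muF p (upClos A)) / muF p B

end


set_option linter.unusedSectionVars false
set_option maxHeartbeats 1000000

namespace BPP

variable {X : Type*} [Fintype X] [DecidableEq X]

lemma mu_nonneg {p : ℝ} (h0 : 0 ≤ p) (h1 : p ≤ 1) (S : Finset X) : 0 ≤ mu p S := by
  unfold mu
  exact mul_nonneg (pow_nonneg h0 _) (pow_nonneg (by linarith) _)

lemma sum_pow_powerset (u : Finset X) (x y : ℝ) :
    ∑ A ∈ u.powerset, x ^ A.card * y ^ (u.card - A.card) = (x + y) ^ u.card := by
  have h := Finset.prod_add (fun _ : X => x) (fun _ => y) u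
  simp only [Finset.prod_const] at h
  rw [h]
  exact Finset.sum_congr rfl fun t ht => by
    rw [Finset.card_sdiff_of_subset (Finset.mem_powerset.mp ht)]

lemma card_compl' (T : Finset X) : Tᶜ.card = Fintype.card X - T.card := by
  rw [Finset.card_compl]

lemma sum_mu_univ (p : ℝ) : ∑ S : Finset X, mu p S = 1 := by
  have h := sum_pow_powerset (Finset.univ : Finset X) p (1 - p)
  simp only [Finset.powerset_univ, Finset.card_univ, add_sub_cancel, one_pow] at h
  rw [← h]
  apply Finset.sum_congr rfl
  intro S _
  rfl

lemma filter_superset_eq_image (T : Finset X) :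
    Finset.univ.filter (fun S => T ⊆ S) = (Tᶜ).powerset.image (fun A => T ∪ A) := by
  ext S
  simp only [Finset.mem_filter, Finset.mem_univ, true_and, Finset.mem_image,
    Finset.mem_powerset]
  constructor
  · intro h
    exact ⟨S \ T, fun x hx => by simp [Finset.mem_sdiff.mp hx],
      by rw [Finset.union_sdiff_self_eq_union, Finset.union_eq_right.mpr h]⟩
  · rintro ⟨A, _, rfl⟩
    exact Finset.subset_union_left

lemma sum_mu_supersets (p : ℝ) (T : Finset X) :
    ∑ S ∈ Finset.univ.filter (fun S => T ⊆ S), mu p S = p ^ T.card := by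
  rw [filter_superset_eq_image]
  rw [Finset.sum_image]
  · have key : ∀ A ∈ (Tᶜ).powerset,
        mu p (T ∪ A) = p ^ T.card * (p ^ A.card * (1 - p) ^ (Tᶜ.card - A.card)) := by
      intro A hA
      have hA' : A ⊆ Tᶜ := Finset.mem_powerset.mp hA
      have hdisj : Disjoint T A := by
        rw [Finset.disjoint_iff_ne]
        intro a ha b hb hab
        exact absurd ha (by simpa [hab] using (Finset.mem_compl.mp (hA' hb)))
      have hcard : (T ∪ A).card = T.card + A.card := Finset.card_union_of_disjoint hdisj
      have hle : A.card ≤ Tᶜ.card := Finset.card_le_card hA'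
      have hTn : T.card ≤ Fintype.card X := Finset.card_le_univ T
      unfold mu
      rw [hcard, pow_add, card_compl'] at *
      have : Fintype.card X - (T.card + A.card) = Fintype.card X - T.card - A.card := by
        omega
      rw [this]
      ring
    rw [Finset.sum_congr rfl key, ← Finset.mul_sum, sum_pow_powerset, add_sub_cancel,
      one_pow, mul_one]
  · intro A hA B hB hAB
    have hA' : A ⊆ Tᶜ := Finset.mem_powerset.mp hA
    have hB' : B ⊆ Tᶜ := Finset.mem_powerset.mp hB
    have : ∀ (C : Finset X), C ⊆ Tᶜ → (T ∪ C) \ T = C := by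
      intro C hC
      rw [Finset.union_sdiff_left]
      apply Finset.sdiff_eq_self_of_disjoint
      rw [Finset.disjoint_iff_ne]
      intro a ha b hb hab
      exact absurd hb (by simpa [← hab] using (Finset.mem_compl.mp (hC ha)))
    rw [← this A hA', ← this B hB', show T ∪ A = T ∪ B from hAB]

lemma muF_le_cover {p : ℝ} (h0 : 0 ≤ p) (h1 : p ≤ 1) {G F : Finset (Finset X)}
    (hG : IsCover G F) : muF p F ≤ ∑ T ∈ G, p ^ T.card := by
  classical
  set f : Finset X → Finset X := fun S => if h : S ∈ F then (hG S h).choose else ∅ with hf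
  have hmaps : ∀ S ∈ F, f S ∈ G := by
    intro S hS
    simp only [hf, dif_pos hS]
    exact (hG S hS).choose_spec.1
  have hsub : ∀ S ∈ F, f S ⊆ S := by
    intro S hS
    simp only [hf, dif_pos hS]
    exact (hG S hS).choose_spec.2
  have := Finset.sum_fiberwise_of_maps_to hmaps (mu p (X := X))
  rw [muF, ← this]
  apply Finset.sum_le_sum
  intro T _
  calc ∑ S ∈ F.filter (fun S => f S = T), mu p S
      ≤ ∑ S ∈ Finset.univ.filter (fun S => T ⊆ S), mu p S := by
        apply Finset.sum_le_sum_of_subset_of_nonneg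
        · intro S hS
          simp only [Finset.mem_filter] at hS ⊢
          exact ⟨Finset.mem_univ _, hS.2 ▸ hsub S hS.1⟩
        · intro S _ _; exact mu_nonneg h0 h1 S
    _ = p ^ T.card := sum_mu_supersets p T

end BPP


namespace BPP
variable {X : Type*} [Fintype X] [DecidableEq X]

def mins (H : Finset (Finset X)) : Finset (Finset X) :=
  H.filter fun T => ∀ T' ∈ H, T' ⊆ T → T' = T

lemma exists_min {H : Finset (Finset X)} (S : Finset X) : S ∈ H → ∃ T ∈ mins H, T ⊆ S := by
  induction S using Finset.strongInduction with
  | _ S ih =>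
    intro hS
    by_cases h : ∀ T' ∈ H, T' ⊆ S → T' = S
    · exact ⟨S, Finset.mem_filter.mpr ⟨hS, h⟩, Finset.Subset.refl S⟩
    · push_neg at h
      obtain ⟨T', hT', hsub, hne⟩ := h
      obtain ⟨T, hT, h2⟩ := ih T' (ssubset_of_subset_of_ne hsub hne) hT'
      exact ⟨T, hT, h2.trans hsub⟩

def HW (M : Finset (Finset X)) (W : Finset X) : Finset (Finset X) :=
  Finset.univ.filter fun T => ∃ S ∈ M, S ⊆ T ∪ W

lemma mem_HW {M : Finset (Finset X)} {W T : Finset X} :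
    T ∈ HW M W ↔ ∃ S ∈ M, S ⊆ T ∪ W := by
  simp [HW]

lemma mins_HW_subset {M : Finset (Finset X)} {W T : Finset X}
    (hT : T ∈ mins (HW M W)) : ∀ S ∈ M, S ⊆ T ∪ W → T = S \ W := by
  intro S hS hSTW
  have hmem : S \ W ∈ HW M W := mem_HW.mpr ⟨S, hS, by
    intro x hx
    by_cases hw : x ∈ W
    · exact Finset.mem_union_right _ hw
    · exact Finset.mem_union_left _ (Finset.mem_sdiff.mpr ⟨hx, hw⟩)⟩
  have hsub : S \ W ⊆ T := by
    intro x hx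
    rcases Finset.mem_sdiff.mp hx with ⟨hxS, hxW⟩
    rcases Finset.mem_union.mp (hSTW hxS) with h | h
    · exact h
    · exact absurd h hxW
  exact ((Finset.mem_filter.mp hT).2 (S \ W) hmem hsub).symm

lemma mins_HW_exists {M : Finset (Finset X)} {W T : Finset X}
    (hT : T ∈ mins (HW M W)) : ∃ S ∈ M, S ⊆ T ∪ W ∧ T = S \ W := by
  obtain ⟨S, hS, hsub⟩ := mem_HW.mp (Finset.mem_filter.mp hT).1
  exact ⟨S, hS, hsub, mins_HW_subset hT S hS hsub⟩

lemma exists_min_frag {M : Finset (Finset X)} {W T : Finset X} (hT : T ∈ M) :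
    ∃ T' ∈ mins (HW M W), T' ⊆ T \ W := by
  apply exists_min
  exact mem_HW.mpr ⟨T, hT, by
    intro x hx
    by_cases hw : x ∈ W
    · exact Finset.mem_union_right _ hw
    · exact Finset.mem_union_left _ (Finset.mem_sdiff.mpr ⟨hx, hw⟩)⟩

def stepK (M : Finset (Finset X)) (b : ℕ) (W : Finset X) : Finset (Finset X) :=
  (mins (HW M W)).filter fun T => T.card ≤ b

def stepD (M : Finset (Finset X)) (b : ℕ) (W : Finset X) : Finset (Finset X) :=
  (mins (HW M W)).filter fun T => b < T.card

def proc (M : Finset (Finset X)) : List ℕ → List (Finset X) → Finset (Finset X) × Finset (Finset X)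
  | b :: bs, W :: ws =>
      ((proc (stepK M b W) bs ws).1, stepD M b W ∪ (proc (stepK M b W) bs ws).2)
  | _, _ => (M, ∅)

lemma proc_nil (M : Finset (Finset X)) (ws : List (Finset X)) : proc M [] ws = (M, ∅) := by
  cases ws <;> rfl

lemma proc_cons (M : Finset (Finset X)) (b : ℕ) (bs : List ℕ) (W : Finset X)
    (ws : List (Finset X)) :
    proc M (b :: bs) (W :: ws) =
      ((proc (stepK M b W) bs ws).1, stepD M b W ∪ (proc (stepK M b W) bs ws).2) := rfl

/-- lift: every final element, together with the union of the sprinkles, engulfs a member of M -/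
lemma proc_fst_lift (bs : List ℕ) : ∀ (ws : List (Finset X)) (M : Finset (Finset X)),
    ∀ T ∈ (proc M bs ws).1, ∃ S ∈ M, S ⊆ T ∪ ws.foldr (· ∪ ·) ∅ := by
  induction bs with
  | nil =>
    intro ws M T hT
    rw [proc_nil] at hT
    exact ⟨T, hT, Finset.subset_union_left⟩
  | cons b bs ih =>
    intro ws M T hT
    cases ws with
    | nil =>
      exact ⟨T, hT, Finset.subset_union_left⟩
    | cons W ws =>
      rw [proc_cons] at hT
      obtain ⟨S₁, hS₁, hsub₁⟩ := ih ws (stepK M b W) T hT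
      have hS₁' : S₁ ∈ mins (HW M W) := (Finset.mem_filter.mp hS₁).1
      obtain ⟨S, hS, hsub, _⟩ := mins_HW_exists hS₁'
      refine ⟨S, hS, ?_⟩
      intro x hx
      rcases Finset.mem_union.mp (hsub hx) with h | h
      · rcases Finset.mem_union.mp (hsub₁ h) with h' | h'
        · exact Finset.mem_union_left _ h'
        · exact Finset.mem_union_right _ (by
            simp only [List.foldr_cons]
            exact Finset.mem_union_right _ h')
      · exact Finset.mem_union_right _ (by
          simp only [List.foldr_cons]
          exact Finset.mem_union_left _ h)

/-- final sizes bounded by last bound -/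
lemma proc_fst_card (bs : List ℕ) : ∀ (ws : List (Finset X)) (M : Finset (Finset X)) (c : ℕ),
    ws.length = bs.length → bs.getLast? = some c →
    ∀ T ∈ (proc M bs ws).1, T.card ≤ c := by
  induction bs with
  | nil => intro ws M c _ h; simp at h
  | cons b bs ih =>
    intro ws M c hlen hlast
    cases ws with
    | nil => simp at hlen
    | cons W ws =>
      rw [proc_cons]
      cases bs with
      | nil =>
        simp only [List.getLast?_singleton, Option.some_inj] at hlast
        cases ws with
        | nil =>
          rw [proc_nil]
          intro T hT
          exact hlast ▸ (Finset.mem_filter.mp hT).2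
        | cons _ _ => simp at hlen
      | cons b' bs' =>
        have : (b :: b' :: bs').getLast? = (b' :: bs').getLast? := by
          simp [List.getLast?_cons_cons]
        rw [this] at hlast
        exact ih ws (stepK M b W) c (by simpa using hlen) hlast

/-- chain lemma -/
lemma proc_chain (bs : List ℕ) : ∀ (ws : List (Finset X)) (M : Finset (Finset X))
    (S₀ T : Finset X), T ∈ M → T ⊆ S₀ →
    (∃ T' ∈ (proc M bs ws).1, T' ⊆ S₀) ∨ (∃ T' ∈ (proc M bs ws).2, T' ⊆ S₀) := by
  induction bs with
  | nil =>
    intro ws M S₀ T hT hTS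
    rw [proc_nil]
    exact Or.inl ⟨T, hT, hTS⟩
  | cons b bs ih =>
    intro ws M S₀ T hT hTS
    cases ws with
    | nil => exact Or.inl ⟨T, hT, hTS⟩
    | cons W ws =>
      rw [proc_cons]
      obtain ⟨T'', hT'', hsub''⟩ := exists_min_frag (W := W) hT
      have hT''S₀ : T'' ⊆ S₀ := hsub''.trans ((Finset.sdiff_subset).trans hTS)
      by_cases hcard : T''.card ≤ b
      · have hK : T'' ∈ stepK M b W := Finset.mem_filter.mpr ⟨hT'', hcard⟩
        rcases ih ws (stepK M b W) S₀ T'' hK hT''S₀ with h | h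
        · exact Or.inl h
        · obtain ⟨T', h1, h2⟩ := h
          exact Or.inr ⟨T', Finset.mem_union_right _ h1, h2⟩
      · exact Or.inr ⟨T'', Finset.mem_union_left _
          (Finset.mem_filter.mpr ⟨hT'', Nat.lt_of_not_le hcard⟩), hT''S₀⟩

/-- all members of stepK have small card and are subsets of members of M -/
lemma stepK_card {M : Finset (Finset X)} {b : ℕ} {W T : Finset X} (hT : T ∈ stepK M b W) :
    T.card ≤ b := (Finset.mem_filter.mp hT).2

end BPP


namespace BPP
variable {X : Type*} [Fintype X] [DecidableEq X]

lemma pair_sum_union (p σ : ℝ) (U : Finset X) :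
    ∑ z ∈ (Finset.univ ×ˢ Finset.univ : Finset (Finset X × Finset X)).filter
        (fun z => z.1 ∪ z.2 = U),
      mu p z.1 * mu σ z.2 = mu (p + (1 - p) * σ) U := by
  classical
  set n := Fintype.card X
  have hUn : U.card ≤ n := Finset.card_le_univ U
  -- reindex by (A, C) with A ⊆ U, C ⊆ A
  rw [Finset.sum_nbij' (i := fun z => (⟨z.1, z.1 ∩ z.2⟩ : Σ _ : Finset X, Finset X))
    (j := fun y => ((y.1, (U \ y.1) ∪ y.2) : Finset X × Finset X))
    (t := U.powerset.sigma fun A => A.powerset)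
    (g := fun y => mu p y.1 * mu σ ((U \ y.1) ∪ y.2))]
  · -- now compute the sigma sum
    rw [Finset.sum_sigma]
    have inner : ∀ A ∈ U.powerset,
        ∑ C ∈ A.powerset, mu p A * mu σ ((U \ A) ∪ C)
          = mu p A * (σ ^ (U.card - A.card) * (1 - σ) ^ (n - U.card)) := by
      intro A hA
      have hAU : A ⊆ U := Finset.mem_powerset.mp hA
      have hAc : A.card ≤ U.card := Finset.card_le_card hAU
      rw [← Finset.mul_sum]
      congr 1
      have key : ∀ C ∈ A.powerset, mu σ ((U \ A) ∪ C)
          = σ ^ (U.card - A.card) * (1 - σ) ^ (n - U.card)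
            * (σ ^ C.card * (1 - σ) ^ (A.card - C.card)) := by
        intro C hC
        have hCA : C ⊆ A := Finset.mem_powerset.mp hC
        have hCc : C.card ≤ A.card := Finset.card_le_card hCA
        have hdisj : Disjoint (U \ A) C := by
          apply Finset.disjoint_left.mpr
          intro a ha hac
          exact (Finset.mem_sdiff.mp ha).2 (hCA hac)
        have hcard : ((U \ A) ∪ C).card = (U.card - A.card) + C.card := by
          rw [Finset.card_union_of_disjoint hdisj, Finset.card_sdiff_of_subset hAU]
        unfold mu
        rw [hcard, pow_add]
        have : n - ((U.card - A.card) + C.card) = (n - U.card) + (A.card - C.card) := by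
          omega
        rw [this, pow_add]
        ring
      rw [Finset.sum_congr rfl key, ← Finset.mul_sum, sum_pow_powerset, add_sub_cancel,
        one_pow, mul_one]
    rw [Finset.sum_congr rfl inner]
    have outer : ∀ A ∈ U.powerset,
        mu p A * (σ ^ (U.card - A.card) * (1 - σ) ^ (n - U.card))
          = ((1 - p) * (1 - σ)) ^ (n - U.card)
            * (p ^ A.card * ((1 - p) * σ) ^ (U.card - A.card)) := by
      intro A hA
      have hAc : A.card ≤ U.card := Finset.card_le_card (Finset.mem_powerset.mp hA)
      unfold mu
      have : n - A.card = (U.card - A.card) + (n - U.card) := by omega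
      rw [this, pow_add, mul_pow, mul_pow]
      ring
    rw [Finset.sum_congr rfl outer, ← Finset.mul_sum, sum_pow_powerset]
    unfold mu
    have h1 : (1 - (p + (1 - p) * σ)) = (1 - p) * (1 - σ) := by ring
    have h2 : (p + (1 - p) * σ) = (p + (1 - p) * σ) := rfl
    rw [h1]
    ring
  · -- i maps s into t
    intro z hz
    simp only [Finset.mem_filter, Finset.mem_product] at hz
    simp only [Finset.mem_sigma, Finset.mem_powerset]
    exact ⟨hz.2 ▸ Finset.subset_union_left, Finset.inter_subset_left⟩
  · -- j maps t into s
    intro y hy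
    simp only [Finset.mem_sigma, Finset.mem_powerset] at hy
    simp only [Finset.mem_filter, Finset.mem_product, Finset.mem_univ, true_and]
    obtain ⟨h1, h2⟩ := hy
    apply Finset.Subset.antisymm
    · intro x hx
      rcases Finset.mem_union.mp hx with h | h
      · exact h1 h
      · rcases Finset.mem_union.mp h with h' | h'
        · exact (Finset.mem_sdiff.mp h').1
        · exact h1 (h2 h')
    · intro x hx
      by_cases hxA : x ∈ y.1
      · exact Finset.mem_union_left _ hxA
      · exact Finset.mem_union_right _
          (Finset.mem_union_left _ (Finset.mem_sdiff.mpr ⟨hx, hxA⟩))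
  · -- j ∘ i = id
    intro z hz
    simp only [Finset.mem_filter, Finset.mem_product] at hz
    have : (U \ z.1) ∪ (z.1 ∩ z.2) = z.2 := by
      apply Finset.Subset.antisymm
      · intro x hx
        rcases Finset.mem_union.mp hx with h | h
        · rcases Finset.mem_sdiff.mp h with ⟨hxU, hxA⟩
          rcases Finset.mem_union.mp (hz.2 ▸ hxU : x ∈ z.1 ∪ z.2) with h' | h'
          · exact absurd h' hxA
          · exact h'
        · exact (Finset.mem_inter.mp h).2
      · intro x hx
        by_cases hxA : x ∈ z.1
        · exact Finset.mem_union_right _ (Finset.mem_inter.mpr ⟨hxA, hx⟩)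
        · exact Finset.mem_union_left _ (Finset.mem_sdiff.mpr
            ⟨hz.2 ▸ Finset.mem_union_right _ hx, hxA⟩)
    simp [this]
  · -- i ∘ j = id
    intro y hy
    simp only [Finset.mem_sigma, Finset.mem_powerset] at hy
    obtain ⟨h1, h2⟩ := hy
    have : y.1 ∩ ((U \ y.1) ∪ y.2) = y.2 := by
      rw [Finset.inter_union_distrib_left]
      have e1 : y.1 ∩ (U \ y.1) = ∅ := by
        apply Finset.eq_empty_of_forall_notMem
        intro x hx
        exact (Finset.mem_sdiff.mp (Finset.mem_inter.mp hx).2).2 (Finset.mem_inter.mp hx).1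
      have e2 : y.1 ∩ y.2 = y.2 := Finset.inter_eq_right.mpr h2
      rw [e1, e2, Finset.empty_union]
    simp [this]
  · -- values agree
    intro z hz
    simp only [Finset.mem_filter, Finset.mem_product] at hz
    have : (U \ z.1) ∪ (z.1 ∩ z.2) = z.2 := by
      apply Finset.Subset.antisymm
      · intro x hx
        rcases Finset.mem_union.mp hx with h | h
        · rcases Finset.mem_sdiff.mp h with ⟨hxU, hxA⟩
          rcases Finset.mem_union.mp (hz.2 ▸ hxU : x ∈ z.1 ∪ z.2) with h' | h'
          · exact absurd h' hxA
          · exact h'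
        · exact (Finset.mem_inter.mp h).2
      · intro x hx
        by_cases hxA : x ∈ z.1
        · exact Finset.mem_union_right _ (Finset.mem_inter.mpr ⟨hxA, hx⟩)
        · exact Finset.mem_union_left _ (Finset.mem_sdiff.mpr
            ⟨hz.2 ▸ Finset.mem_union_right _ hx, hxA⟩)
    rw [this]

lemma union_law (p σ : ℝ) (φ : Finset X → ℝ) :
    ∑ A : Finset X, mu p A * ∑ B : Finset X, mu σ B * φ (A ∪ B)
      = ∑ U : Finset X, mu (p + (1 - p) * σ) U * φ U := by
  classical
  have step1 : ∑ A : Finset X, mu p A * ∑ B : Finset X, mu σ B * φ (A ∪ B)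
      = ∑ z ∈ (Finset.univ ×ˢ Finset.univ : Finset (Finset X × Finset X)),
          mu p z.1 * mu σ z.2 * φ (z.1 ∪ z.2) := by
    rw [Finset.sum_product]
    apply Finset.sum_congr rfl
    intro A _
    rw [Finset.mul_sum]
    apply Finset.sum_congr rfl
    intro B _
    ring
  rw [step1]
  rw [← Finset.sum_fiberwise_of_maps_to (g := fun z => z.1 ∪ z.2) (t := Finset.univ)
    (fun z _ => Finset.mem_univ _)]
  apply Finset.sum_congr rfl
  intro U _
  have : ∀ z ∈ (Finset.univ ×ˢ Finset.univ : Finset (Finset X × Finset X)).filter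
      (fun z => z.1 ∪ z.2 = U), mu p z.1 * mu σ z.2 * φ (z.1 ∪ z.2)
        = mu p z.1 * mu σ z.2 * φ U := by
    intro z hz
    rw [(Finset.mem_filter.mp hz).2]
  rw [Finset.sum_congr rfl this, ← Finset.sum_mul, pair_sum_union]

end BPP


namespace BPP
variable {X : Type*} [Fintype X] [DecidableEq X]

noncomputable def EL (σ : ℝ) : ℕ → (List (Finset X) → ℝ) → ℝ
  | 0, f => f []
  | m + 1, f => ∑ W : Finset X, mu σ W * EL σ m (fun ws => f (W :: ws))

lemma EL_mono {σ : ℝ} (h0 : 0 ≤ σ) (h1 : σ ≤ 1) :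
    ∀ (m : ℕ) (f g : List (Finset X) → ℝ), (∀ ws, f ws ≤ g ws) → EL σ m f ≤ EL σ m g := by
  intro m
  induction m with
  | zero => intro f g h; exact h []
  | succ m ih =>
    intro f g h
    apply Finset.sum_le_sum
    intro W _
    exact mul_le_mul_of_nonneg_left (ih _ _ (fun ws => h (W :: ws))) (mu_nonneg h0 h1 W)

lemma EL_const {σ : ℝ} (c : ℝ) : ∀ m : ℕ, EL σ m (fun _ : List (Finset X) => c) = c := by
  intro m
  induction m with
  | zero => rfl
  | succ m ih =>
    show ∑ W : Finset X, mu σ W * EL σ m (fun _ => c) = c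
    calc ∑ W : Finset X, mu σ W * EL σ m (fun _ : List (Finset X) => c)
        = ∑ W : Finset X, mu σ W * c := by
          apply Finset.sum_congr rfl; intro W _; rw [ih]
      _ = c := by rw [← Finset.sum_mul, sum_mu_univ, one_mul]

lemma EL_fold (σ : ℝ) : ∀ (m : ℕ) (φ : Finset X → ℝ),
    EL σ m (fun ws => φ (ws.foldr (· ∪ ·) ∅))
      = ∑ U : Finset X, mu (1 - (1 - σ) ^ m) U * φ U := by
  intro m
  induction m with
  | zero =>
    intro φ
    show φ ∅ = ∑ U : Finset X, mu (1 - (1 - σ) ^ 0) U * φ U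
    have : (1 : ℝ) - (1 - σ) ^ 0 = 0 := by norm_num
    rw [this]
    rw [Finset.sum_eq_single (∅ : Finset X)]
    · unfold mu; simp
    · intro U _ hU
      unfold mu
      have : U.card ≠ 0 := fun h => hU (Finset.card_eq_zero.mp h)
      simp [zero_pow this]
    · intro h; exact absurd (Finset.mem_univ _) h
  | succ m ih =>
    intro φ
    show ∑ W : Finset X, mu σ W * EL σ m (fun ws => φ ((W :: ws).foldr (· ∪ ·) ∅))
        = ∑ U : Finset X, mu (1 - (1 - σ) ^ (m + 1)) U * φ U
    have e1 : ∀ W : Finset X, EL σ m (fun ws => φ ((W :: ws).foldr (· ∪ ·) ∅))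
        = ∑ V : Finset X, mu (1 - (1 - σ) ^ m) V * φ (W ∪ V) := by
      intro W
      have := ih (fun V => φ (W ∪ V))
      simpa using this
    calc ∑ W : Finset X, mu σ W * EL σ m (fun ws => φ ((W :: ws).foldr (· ∪ ·) ∅))
        = ∑ W : Finset X, mu σ W * ∑ V : Finset X, mu (1 - (1 - σ) ^ m) V * φ (W ∪ V) := by
          apply Finset.sum_congr rfl; intro W _; rw [e1]
      _ = ∑ U : Finset X, mu (σ + (1 - σ) * (1 - (1 - σ) ^ m)) U * φ U :=
          union_law σ (1 - (1 - σ) ^ m) φ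
      _ = ∑ U : Finset X, mu (1 - (1 - σ) ^ (m + 1)) U * φ U := by
          have : σ + (1 - σ) * (1 - (1 - σ) ^ m) = 1 - (1 - σ) ^ (m + 1) := by ring
          rw [this]

/-- indicator of membership in F -/
noncomputable def ind (F : Finset (Finset X)) (U : Finset X) : ℝ := if U ∈ F then 1 else 0

lemma sum_mu_ind (p : ℝ) (F : Finset (Finset X)) :
    ∑ U : Finset X, mu p U * ind F U = muF p F := by
  rw [muF]
  rw [← Finset.sum_filter_add_sum_filter_not Finset.univ (fun U => U ∈ F)]
  have h1 : ∑ U ∈ Finset.univ.filter (fun U => U ∈ F), mu p U * ind F U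
      = ∑ U ∈ Finset.univ.filter (fun U => U ∈ F), mu p U := by
    apply Finset.sum_congr rfl
    intro U hU
    rw [ind, if_pos (Finset.mem_filter.mp hU).2, mul_one]
  have h2 : ∑ U ∈ Finset.univ.filter (fun U => ¬ U ∈ F), mu p U * ind F U = 0 := by
    apply Finset.sum_eq_zero
    intro U hU
    rw [ind, if_neg (Finset.mem_filter.mp hU).2, mul_zero]
  rw [h1, h2, add_zero]
  congr 1
  apply Finset.filter_univ_mem

lemma ind_union_ge {F : Finset (Finset X)} (hup : IsUpperFam F) (A B : Finset X) :
    ind F A ≤ ind F (A ∪ B) := by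
  unfold ind
  by_cases h : A ∈ F
  · rw [if_pos h, if_pos (hup A h _ Finset.subset_union_left)]
  · rw [if_neg h]
    by_cases h' : A ∪ B ∈ F <;> simp [h']

lemma ind_nonneg (F : Finset (Finset X)) (U : Finset X) : 0 ≤ ind F U := by
  unfold ind; by_cases h : U ∈ F <;> simp [h]

lemma muF_mono {F : Finset (Finset X)} (hup : IsUpperFam F) {p p' : ℝ}
    (h0 : 0 ≤ p) (hpp' : p ≤ p') (h1 : p' ≤ 1) : muF p F ≤ muF p' F := by
  by_cases hp1 : p = 1
  · have : p' = 1 := le_antisymm h1 (hp1 ▸ hpp')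
    rw [hp1, this]
  · have hplt : p < 1 := lt_of_le_of_ne (hpp'.trans h1) hp1
    set σ := (p' - p) / (1 - p) with hσ
    have hσ0 : 0 ≤ σ := div_nonneg (by linarith) (by linarith)
    have hσ1 : σ ≤ 1 := (div_le_one (by linarith)).mpr (by linarith)
    have hne : (1:ℝ) - p ≠ 0 := by linarith
    have hps : p + (1 - p) * σ = p' := by
      rw [hσ, mul_div_assoc']
      field_simp
      ring
    have key := union_law (X := X) p σ (ind F)
    rw [hps, sum_mu_ind] at key
    rw [← key, ← sum_mu_ind p F]
    apply Finset.sum_le_sum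
    intro A _
    apply mul_le_mul_of_nonneg_left _ (mu_nonneg h0 (by linarith) A)
    calc ind F A = (∑ B : Finset X, mu σ B) * ind F A := by rw [sum_mu_univ, one_mul]
      _ = ∑ B : Finset X, mu σ B * ind F A := by rw [Finset.sum_mul]
      _ ≤ ∑ B : Finset X, mu σ B * ind F (A ∪ B) := by
          apply Finset.sum_le_sum
          intro B _
          exact mul_le_mul_of_nonneg_left (ind_union_ge hup A B) (mu_nonneg hσ0 hσ1 B)

lemma muF_strict {F : Finset (Finset X)} (hup : IsUpperFam F) {p p' : ℝ}
    (h0 : 0 < p) (hpp' : p < p') (h1 : p' ≤ 1) (A₀ : Finset X) (hA₀ : A₀ ∉ F)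
    (huniv : Finset.univ ∈ F) : muF p F < muF p' F := by
  have hplt : p < 1 := lt_of_lt_of_le hpp' h1
  set σ := (p' - p) / (1 - p) with hσ
  have hσ0 : 0 < σ := div_pos (by linarith) (by linarith)
  have hσ1 : σ ≤ 1 := (div_le_one (by linarith)).mpr (by linarith)
  have hne : (1:ℝ) - p ≠ 0 := by linarith
  have hps : p + (1 - p) * σ = p' := by
    rw [hσ, mul_div_assoc']
    field_simp
    ring
  have key := union_law (X := X) p σ (ind F)
  rw [hps, sum_mu_ind] at key
  rw [← key, ← sum_mu_ind p F]
  have hterm : ∀ A : Finset X,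
      mu p A * ind F A ≤ mu p A * ∑ B : Finset X, mu σ B * ind F (A ∪ B) := by
    intro A
    apply mul_le_mul_of_nonneg_left _ (mu_nonneg (le_of_lt h0) (by linarith) A)
    calc ind F A = (∑ B : Finset X, mu σ B) * ind F A := by rw [sum_mu_univ, one_mul]
      _ = ∑ B : Finset X, mu σ B * ind F A := by rw [Finset.sum_mul]
      _ ≤ ∑ B : Finset X, mu σ B * ind F (A ∪ B) := by
          apply Finset.sum_le_sum
          intro B _
          exact mul_le_mul_of_nonneg_left (ind_union_ge hup A B)
            (mu_nonneg (le_of_lt hσ0) hσ1 B)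
  have hstrictA : mu p A₀ * ind F A₀ < mu p A₀ * ∑ B : Finset X, mu σ B * ind F (A₀ ∪ B) := by
    have hmuA : 0 < mu p A₀ := by
      unfold mu
      apply mul_pos (pow_pos h0 _) (pow_pos (by linarith) _)
    apply mul_lt_mul_of_pos_left _ hmuA
    have hBu : mu σ (Finset.univ : Finset X) * ind F (A₀ ∪ Finset.univ) = σ ^ Fintype.card X := by
      have hmemb : A₀ ∪ Finset.univ ∈ F := by
        have : A₀ ∪ Finset.univ = Finset.univ := by
          apply Finset.Subset.antisymm (Finset.subset_univ _) Finset.subset_union_right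
        rw [this]; exact huniv
      unfold mu ind
      rw [if_pos hmemb]
      simp [Finset.card_univ]
    calc ind F A₀ = 0 := by rw [ind, if_neg hA₀]
      _ < σ ^ Fintype.card X := pow_pos hσ0 _
      _ = mu σ (Finset.univ : Finset X) * ind F (A₀ ∪ Finset.univ) := hBu.symm
      _ ≤ ∑ B : Finset X, mu σ B * ind F (A₀ ∪ B) := by
          apply Finset.single_le_sum (f := fun B => mu σ B * ind F (A₀ ∪ B))
          · intro B _
            exact mul_nonneg (mu_nonneg (le_of_lt hσ0) hσ1 B) (ind_nonneg F _)
          · exact Finset.mem_univ _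
  calc ∑ A : Finset X, mu p A * ind F A
      = ∑ A ∈ Finset.univ.erase A₀, mu p A * ind F A + mu p A₀ * ind F A₀ := by
        rw [Finset.sum_erase_add _ _ (Finset.mem_univ A₀)]
    _ < ∑ A ∈ Finset.univ.erase A₀, mu p A * (∑ B : Finset X, mu σ B * ind F (A ∪ B))
        + mu p A₀ * ∑ B : Finset X, mu σ B * ind F (A₀ ∪ B) := by
        apply add_lt_add_of_le_of_lt _ hstrictA
        apply Finset.sum_le_sum
        intro A _
        exact hterm A
    _ = ∑ A : Finset X, mu p A * ∑ B : Finset X, mu σ B * ind F (A ∪ B) := by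
        rw [Finset.sum_erase_add _ _ (Finset.mem_univ A₀)]

end BPP


namespace BPP
variable {X : Type*} [Fintype X] [DecidableEq X]

noncomputable def wt (r : ℝ) (G : Finset (Finset X)) : ℝ := ∑ T ∈ G, r ^ T.card

lemma wt_nonneg {r : ℝ} (hr : 0 ≤ r) (G : Finset (Finset X)) : 0 ≤ wt r G :=
  Finset.sum_nonneg fun T _ => pow_nonneg hr _

lemma wt_union_le {r : ℝ} (hr : 0 ≤ r) (A B : Finset (Finset X)) :
    wt r (A ∪ B) ≤ wt r A + wt r B := by
  unfold wt
  rw [← Finset.sum_union_inter]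
  have : 0 ≤ ∑ T ∈ A ∩ B, r ^ T.card := Finset.sum_nonneg fun T _ => pow_nonneg hr _
  linarith

/-- sum of y^card over subsets of S with card > b, bounded via binomials -/
lemma powerset_tail_bound {S : Finset X} {a b : ℕ} (hS : S.card ≤ a) {y : ℝ} (hy : 0 ≤ y) :
    ∑ T ∈ S.powerset.filter (fun T => b < T.card), y ^ T.card
      ≤ ∑ j ∈ Finset.Icc (b + 1) a, (a.choose j : ℝ) * y ^ j := by
  classical
  rw [Finset.sum_filter, Finset.powerset_card_disjiUnion]
  erw [Finset.sum_disjiUnion]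
  have e1 : ∀ j ∈ Finset.range (S.card + 1),
      ∑ T ∈ Finset.powersetCard j S, (if b < T.card then y ^ T.card else 0)
        = (if b < j then (S.card.choose j : ℝ) * y ^ j else 0) := by
    intro j _
    have e0 : ∀ T ∈ Finset.powersetCard j S, (if b < T.card then y ^ T.card else 0)
        = (if b < j then y ^ j else 0) := by
      intro T hT
      rw [(Finset.mem_powersetCard.mp hT).2]
    rw [Finset.sum_congr rfl e0, Finset.sum_const, Finset.card_powersetCard]
    by_cases h : b < j <;> simp [h]
  rw [Finset.sum_congr rfl e1, ← Finset.sum_filter]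
  calc ∑ j ∈ (Finset.range (S.card + 1)).filter (fun j => b < j),
        (S.card.choose j : ℝ) * y ^ j
      ≤ ∑ j ∈ (Finset.range (S.card + 1)).filter (fun j => b < j),
        (a.choose j : ℝ) * y ^ j := by
        apply Finset.sum_le_sum
        intro j _
        apply mul_le_mul_of_nonneg_right _ (pow_nonneg hy j)
        exact_mod_cast Nat.choose_le_choose j hS
    _ ≤ ∑ j ∈ Finset.Icc (b + 1) a, (a.choose j : ℝ) * y ^ j := by
        apply Finset.sum_le_sum_of_subset_of_nonneg
        · intro j hj
          simp only [Finset.mem_filter, Finset.mem_range] at hj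
          exact Finset.mem_Icc.mpr ⟨hj.2, by omega⟩
        · intro j _ _
          positivity

lemma round_bound {M : Finset (Finset X)} {a b : ℕ} (hM : ∀ S ∈ M, S.card ≤ a)
    {σ r : ℝ} (hσ0 : 0 < σ) (hσ1 : σ ≤ 1) (hr : 0 ≤ r) :
    ∑ W : Finset X, mu σ W * wt r (stepD M b W)
      ≤ ∑ j ∈ Finset.Icc (b + 1) a, (a.choose j : ℝ) * (r * (1 - σ) / σ) ^ j := by
  classical
  obtain ⟨y, hydef⟩ : ∃ y : ℝ, y = r * (1 - σ) / σ := ⟨_, rfl⟩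
  rw [← hydef]
  have hy0 : 0 ≤ y := by
    rw [hydef]
    apply div_nonneg (mul_nonneg hr (by linarith)) (le_of_lt hσ0)
  have hσy : σ * y = r * (1 - σ) := by
    rw [hydef, mul_div_cancel₀]
    exact ne_of_gt hσ0
  clear hydef
  set RHS := ∑ j ∈ Finset.Icc (b + 1) a, (a.choose j : ℝ) * y ^ j with hRHS
  have hRHS0 : 0 ≤ RHS := by
    apply Finset.sum_nonneg
    intro j _
    positivity
  -- disjointness of members of stepD from W
  have hdisjD : ∀ (W T : Finset X), T ∈ stepD M b W → Disjoint T W := by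
    intro W T hT
    obtain ⟨S, _, _, hTS⟩ := mins_HW_exists (Finset.mem_filter.mp hT).1
    rw [hTS]
    exact Finset.sdiff_disjoint
  -- step 1: write as sum over pairs
  set P := (Finset.univ ×ˢ Finset.univ : Finset (Finset X × Finset X)).filter
      (fun z => z.2 ∈ stepD M b z.1) with hP
  have e1 : ∑ W : Finset X, mu σ W * wt r (stepD M b W)
      = ∑ z ∈ P, mu σ z.1 * r ^ z.2.card := by
    rw [hP, Finset.sum_filter, Finset.sum_product]
    apply Finset.sum_congr rfl
    intro W _
    rw [wt, Finset.mul_sum]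
    symm
    simp only
    rw [Finset.sum_ite_mem, Finset.univ_inter]
  rw [e1]
  -- step 2: push through the injection z ↦ (z.1 ∪ z.2, z.2)
  set e : Finset X × Finset X → Finset X × Finset X := fun z => (z.1 ∪ z.2, z.2) with he
  set g : Finset X × Finset X → ℝ := fun z => mu σ (z.1 \ z.2) * r ^ z.2.card with hg
  have hinj : ∀ z ∈ P, ∀ w ∈ P, e z = e w → z = w := by
    intro z hz w hw hew
    have hz2 : Disjoint z.2 z.1 := hdisjD _ _ (Finset.mem_filter.mp hz).2
    have hw2 : Disjoint w.2 w.1 := hdisjD _ _ (Finset.mem_filter.mp hw).2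
    simp only [he, Prod.mk.injEq] at hew
    obtain ⟨h1, h2⟩ := hew
    have hq : z.1 = w.1 := by
      have hzz : (z.1 ∪ z.2) \ z.2 = z.1 := Finset.union_sdiff_cancel_right hz2.symm
      have hww : (w.1 ∪ w.2) \ w.2 = w.1 := Finset.union_sdiff_cancel_right hw2.symm
      rw [← hzz, ← hww, h1, h2]
    exact Prod.ext hq h2
  have e2 : ∑ z ∈ P, mu σ z.1 * r ^ z.2.card = ∑ z ∈ P.image e, g z := by
    rw [Finset.sum_image hinj]
    apply Finset.sum_congr rfl
    intro z hz
    have hz2 : Disjoint z.2 z.1 := hdisjD _ _ (Finset.mem_filter.mp hz).2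
    rw [hg, he]
    simp only
    rw [Finset.union_sdiff_cancel_right hz2.symm]
  rw [e2]
  -- step 3: image contained in Q
  set Q := (Finset.univ ×ˢ Finset.univ : Finset (Finset X × Finset X)).filter
      (fun z => z.2 ⊆ z.1 ∧ b < z.2.card ∧ (∃ S ∈ M, S ⊆ z.1)
        ∧ (∀ S ∈ M, S ⊆ z.1 → z.2 ⊆ S)) with hQ
  have hPQ : P.image e ⊆ Q := by
    intro z hz
    obtain ⟨w, hw, rfl⟩ := Finset.mem_image.mp hz
    have hwP := (Finset.mem_filter.mp hw).2
    have hmins : w.2 ∈ mins (HW M w.1) := (Finset.mem_filter.mp hwP).1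
    have hbig : b < w.2.card := (Finset.mem_filter.mp hwP).2
    rw [hQ]
    simp only [Finset.mem_filter, Finset.mem_product, Finset.mem_univ, true_and, he]
    refine ⟨Finset.subset_union_right, hbig, ?_, ?_⟩
    · obtain ⟨S, hS, hsub, _⟩ := mins_HW_exists hmins
      exact ⟨S, hS, by rwa [Finset.union_comm]⟩
    · intro S hS hsub
      have := mins_HW_subset hmins S hS (by rwa [Finset.union_comm] at hsub)
      rw [this]
      exact Finset.sdiff_subset
  have e3 : ∑ z ∈ P.image e, g z ≤ ∑ z ∈ Q, g z := by
    apply Finset.sum_le_sum_of_subset_of_nonneg hPQ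
    intro z _ _
    exact mul_nonneg (mu_nonneg (le_of_lt hσ0) hσ1 _) (pow_nonneg hr _)
  -- step 4: bound the Q-sum fiberwise in Z = z.1
  have e4 : ∑ z ∈ Q, g z ≤ ∑ Z : Finset X, mu σ Z * RHS := by
    rw [hQ, Finset.sum_filter, Finset.sum_product]
    apply Finset.sum_le_sum
    intro Z _
    by_cases hex : ∃ S ∈ M, S ⊆ Z
    · obtain ⟨S₀, hS₀M, hS₀Z⟩ := hex
      have hS₀a : S₀.card ≤ a := hM S₀ hS₀M
      calc ∑ T : Finset X, (if T ⊆ Z ∧ b < T.card ∧ (∃ S ∈ M, S ⊆ Z)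
              ∧ (∀ S ∈ M, S ⊆ Z → T ⊆ S) then g (Z, T) else 0)
          ≤ ∑ T ∈ S₀.powerset.filter (fun T => b < T.card), g (Z, T) := by
            rw [← Finset.sum_filter]
            apply Finset.sum_le_sum_of_subset_of_nonneg
            · intro T hT
              simp only [Finset.mem_filter, Finset.mem_univ, true_and] at hT
              exact Finset.mem_filter.mpr
                ⟨Finset.mem_powerset.mpr (hT.2.2.2 S₀ hS₀M hS₀Z), hT.2.1⟩
            · intro T _ _
              exact mul_nonneg (mu_nonneg (le_of_lt hσ0) hσ1 _) (pow_nonneg hr _)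
        _ ≤ mu σ Z * RHS := by
            have key : ∀ T ∈ S₀.powerset.filter (fun T => b < T.card),
                g (Z, T) = mu σ Z * y ^ T.card := by
              intro T hT
              have hTS₀ : T ⊆ S₀ := Finset.mem_powerset.mp (Finset.mem_filter.mp hT).1
              have hTZ : T ⊆ Z := hTS₀.trans hS₀Z
              have hcZ : Z.card ≤ Fintype.card X := Finset.card_le_univ Z
              have hcT : T.card ≤ Z.card := Finset.card_le_card hTZ
              rw [hg]
              simp only
              unfold mu
              rw [Finset.card_sdiff_of_subset hTZ]
              have harith : Fintype.card X - (Z.card - T.card)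
                  = (Fintype.card X - Z.card) + T.card := by omega
              rw [harith, pow_add]
              have hZsplit : (σ : ℝ) ^ Z.card = σ ^ (Z.card - T.card) * σ ^ T.card := by
                rw [← pow_add]
                congr 1
                omega
              rw [hZsplit]
              have hpows : σ ^ T.card * y ^ T.card = (1 - σ) ^ T.card * r ^ T.card := by
                rw [← mul_pow, hσy, mul_pow]
                ring
              linear_combination
                (-(σ ^ (Z.card - T.card) * (1 - σ) ^ (Fintype.card X - Z.card))) * hpows
            rw [Finset.sum_congr rfl key, ← Finset.mul_sum]
            apply mul_le_mul_of_nonneg_left _ (mu_nonneg (le_of_lt hσ0) hσ1 Z)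
            exact powerset_tail_bound hS₀a hy0
    · -- fiber empty
      have : ∀ T : Finset X, (if T ⊆ Z ∧ b < T.card ∧ (∃ S ∈ M, S ⊆ Z)
          ∧ (∀ S ∈ M, S ⊆ Z → T ⊆ S) then g (Z, T) else 0) = 0 := by
        intro T
        rw [if_neg]
        intro h
        exact hex h.2.2.1
      rw [Finset.sum_congr rfl fun T _ => this T]
      rw [Finset.sum_const, smul_zero]
      exact mul_nonneg (mu_nonneg (le_of_lt hσ0) hσ1 Z) hRHS0
  calc ∑ z ∈ P.image e, g z ≤ ∑ Z : Finset X, mu σ Z * RHS := e3.trans e4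
    _ = RHS := by rw [← Finset.sum_mul, sum_mu_univ, one_mul]

end BPP


namespace BPP

lemma choose_central_nat : ∀ b : ℕ, 1 ≤ b → 4 * ((2*b+1).choose (b+1)) ≤ 3 * 4^b := by
  intro b hb
  induction b with
  | zero => omega
  | succ b ih =>
    by_cases hb1 : b = 0
    · subst hb1; decide
    · have hb' : 1 ≤ b := Nat.one_le_iff_ne_zero.mpr hb1
      have h1 : (2*(b+1)+1).choose (b+2) = (2*b+2).choose (b+1) + (2*b+2).choose (b+2) := by
        have : 2*(b+1)+1 = (2*b+2)+1 := by ring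
        rw [this]
        exact Nat.choose_succ_succ (2*b+2) (b+1)
      have h2 : (2*b+2).choose (b+2) ≤ (2*b+2).choose (b+1) := by
        have := Nat.choose_le_middle (b+2) (2*b+2)
        have he : (2*b+2)/2 = b+1 := by omega
        rwa [he] at this
      have h3 : (2*b+2).choose (b+1) = (2*b+1).choose b + (2*b+1).choose (b+1) := by
        have : 2*b+2 = (2*b+1)+1 := by ring
        rw [this]
        exact Nat.choose_succ_succ (2*b+1) b
      have h4 : (2*b+1).choose b = (2*b+1).choose (b+1) := by
        have hle : b+1 ≤ 2*b+1 := by omega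
        have := Nat.choose_symm hle
        have he : 2*b+1 - (b+1) = b := by omega
        rw [he] at this
        exact this
      have key : (2*(b+1)+1).choose (b+2) ≤ 4 * ((2*b+1).choose (b+1)) := by
        calc (2*(b+1)+1).choose (b+2) = (2*b+2).choose (b+1) + (2*b+2).choose (b+2) := h1
          _ ≤ 2 * ((2*b+2).choose (b+1)) := by omega
          _ = 2 * ((2*b+1).choose b + (2*b+1).choose (b+1)) := by rw [h3]
          _ = 4 * ((2*b+1).choose (b+1)) := by rw [h4]; ring
      have ihh := ih hb'
      calc 4 * ((2*(b+1)+1).choose (b+1+1)) ≤ 4 * (4 * ((2*b+1).choose (b+1))) := by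
            have : b+1+1 = b+2 := rfl
            rw [this]
            omega
        _ ≤ 4 * (3 * 4^b) := by omega
        _ = 3 * 4^(b+1) := by ring

lemma choose_central_bound {b : ℕ} (hb : 1 ≤ b) :
    (((2*b+1).choose (b+1) : ℝ)) ≤ 3/4 * 4^b := by
  have := choose_central_nat b hb
  have h : ((4 * ((2*b+1).choose (b+1)) : ℕ) : ℝ) ≤ ((3 * 4^b : ℕ) : ℝ) := by exact_mod_cast this
  push_cast at h
  linarith

lemma geom_sum_le_inv {x : ℝ} (h0 : 0 ≤ x) (h1 : x < 1) (n : ℕ) :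
    ∑ i ∈ Finset.range n, x ^ i ≤ 1 / (1 - x) := by
  have hg := geom_sum_mul x n
  have hxn : (0:ℝ) ≤ x ^ n := pow_nonneg h0 n
  rw [le_div_iff₀ (by linarith : (0:ℝ) < 1 - x)]
  nlinarith [hg]

lemma geom_tail {x : ℝ} (h0 : 0 ≤ x) (h1 : x < 1) (b a : ℕ) :
    ∑ j ∈ Finset.Icc (b+1) a, x ^ j ≤ x^(b+1) / (1 - x) := by
  classical
  have hsub : Finset.Icc (b+1) a ⊆ (Finset.range (a - b)).image (fun t => b+1+t) := by
    intro j hj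
    rw [Finset.mem_Icc] at hj
    apply Finset.mem_image.mpr
    exact ⟨j - (b+1), Finset.mem_range.mpr (by omega), by omega⟩
  calc ∑ j ∈ Finset.Icc (b+1) a, x ^ j
      ≤ ∑ j ∈ (Finset.range (a - b)).image (fun t => b+1+t), x ^ j := by
        apply Finset.sum_le_sum_of_subset_of_nonneg hsub
        intro j _ _; exact pow_nonneg h0 j
    _ = ∑ t ∈ Finset.range (a - b), x ^ (b+1+t) := by
        rw [Finset.sum_image]
        intro s _ t _ h
        simp only at h
        omega
    _ = x^(b+1) * ∑ t ∈ Finset.range (a - b), x ^ t := by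
        rw [Finset.mul_sum]
        apply Finset.sum_congr rfl
        intro t _
        rw [pow_add]
    _ ≤ x^(b+1) * (1 / (1-x)) := by
        apply mul_le_mul_of_nonneg_left (geom_sum_le_inv h0 h1 _) (pow_nonneg h0 _)
    _ = x^(b+1) / (1-x) := by ring

/-- the per-round numeric bound -/
lemma round_tail_bound {y : ℝ} (hy0 : 0 ≤ y) (hy : y ≤ 1/8) {a : ℕ} (ha : 1 ≤ a) :
    ∑ j ∈ Finset.Icc (a/2+1) a, (a.choose j : ℝ) * y ^ j
      ≤ if a = 1 then (1:ℝ)/8 else (3/28) * ((1:ℝ)/2)^(a/2) := by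
  by_cases ha1 : a = 1
  · subst ha1
    simp only [if_pos rfl]
    norm_num
    linarith
  · rw [if_neg ha1]
    have ha2 : 2 ≤ a := by omega
    set b := a / 2 with hbdef
    have hb1 : 1 ≤ b := by omega
    have hab : a ≤ 2*b+1 := by omega
    have hcententry : ∀ j ∈ Finset.Icc (b+1) a, (a.choose j : ℝ) ≤ ((2*b+1).choose (b+1) : ℝ) := by
      intro j hj
      rw [Finset.mem_Icc] at hj
      have s1 : a.choose j ≤ (2*b+1).choose j := Nat.choose_le_choose j hab
      have s2 : (2*b+1).choose j ≤ (2*b+1).choose ((2*b+1)/2) := Nat.choose_le_middle j (2*b+1)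
      have he : (2*b+1)/2 = b := by omega
      rw [he] at s2
      have s3 : (2*b+1).choose b = (2*b+1).choose (b+1) := by
        have hle : b+1 ≤ 2*b+1 := by omega
        have := Nat.choose_symm hle
        have he2 : 2*b+1 - (b+1) = b := by omega
        rw [he2] at this
        exact this
      rw [s3] at s2
      exact_mod_cast s1.trans s2
    calc ∑ j ∈ Finset.Icc (b+1) a, (a.choose j : ℝ) * y ^ j
        ≤ ∑ j ∈ Finset.Icc (b+1) a, ((2*b+1).choose (b+1) : ℝ) * y ^ j := by
          apply Finset.sum_le_sum
          intro j hj
          exact mul_le_mul_of_nonneg_right (hcententry j hj) (pow_nonneg hy0 j)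
      _ = ((2*b+1).choose (b+1) : ℝ) * ∑ j ∈ Finset.Icc (b+1) a, y ^ j := by
          rw [Finset.mul_sum]
      _ ≤ (3/4 * 4^b) * (y^(b+1) / (1-y)) := by
          apply mul_le_mul (choose_central_bound hb1) (geom_tail hy0 (by linarith) b a)
          · apply Finset.sum_nonneg; intro j _; exact pow_nonneg hy0 j
          · positivity
      _ ≤ (3/4 * 4^b) * (((1:ℝ)/8)^(b+1) / (7/8)) := by
          apply mul_le_mul_of_nonneg_left _ (by positivity)
          apply div_le_div₀ (by positivity) (pow_le_pow_left₀ hy0 hy (b+1)) (by norm_num)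
            (by linarith)
      _ = (3/28) * ((1:ℝ)/2)^b := by
          have h48 : (4:ℝ)^b * ((1:ℝ)/8)^b = ((1:ℝ)/2)^b := by
            rw [← mul_pow]; norm_num
          rw [pow_succ]
          linear_combination (3/28 : ℝ) * h48

end BPP


namespace BPP
variable {X : Type*} [Fintype X] [DecidableEq X]

def halves : ℕ → List ℕ
  | 0 => []
  | a+1 => ((a+1)/2) :: halves ((a+1)/2)
  decreasing_by exact Nat.div_lt_self (Nat.succ_pos a) one_lt_two

lemma halves_succ (a : ℕ) : halves (a+1) = ((a+1)/2) :: halves ((a+1)/2) := by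
  rw [halves]

lemma halves_len_pow : ∀ a : ℕ, 1 ≤ a → 2^(halves a).length ≤ 2*a := by
  intro a
  induction a using Nat.strong_induction_on with
  | _ a ih =>
    intro ha
    rcases a with _ | a'
    · omega
    · rw [halves_succ]
      set b := (a'+1)/2 with hb
      by_cases hb0 : b = 0
      · have : a' = 0 := by omega
        subst this
        simp [hb0, halves]
      · have hb1 : 1 ≤ b := by omega
        have hblt : b < a'+1 := Nat.div_lt_self (Nat.succ_pos a') one_lt_two
        have := ih b hblt hb1
        have h2b : 2*b ≤ a'+1 := by omega
        calc 2^(b :: halves b).length = 2 * 2^(halves b).length := by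
              rw [List.length_cons]; ring
          _ ≤ 2 * (2*b) := by omega
          _ ≤ 2 * (a'+1) := by omega

lemma halves_getLast : ∀ a : ℕ, 1 ≤ a → (halves a).getLast? = some 0 := by
  intro a
  induction a using Nat.strong_induction_on with
  | _ a ih =>
    intro ha
    rcases a with _ | a'
    · omega
    · rw [halves_succ]
      set b := (a'+1)/2 with hb
      by_cases hb0 : b = 0
      · rw [hb0]
        have : halves 0 = [] := by rw [halves]
        rw [this]
        rfl
      · have hb1 : 1 ≤ b := by omega
        have hblt : b < a'+1 := Nat.div_lt_self (Nat.succ_pos a') one_lt_two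
        have hlast := ih b hblt hb1
        have hne : halves b ≠ [] := by
          intro h
          rw [h] at hlast
          simp at hlast
        rcases hhb : halves b with _ | ⟨x, l⟩
        · exact absurd hhb hne
        · rw [← hhb, hhb, List.getLast?_cons_cons, ← hhb]
          exact hlast

lemma EL_mono_len {σ : ℝ} (h0 : 0 ≤ σ) (h1 : σ ≤ 1) :
    ∀ (m : ℕ) (f g : List (Finset X) → ℝ),
      (∀ ws, ws.length = m → f ws ≤ g ws) → EL σ m f ≤ EL σ m g := by
  intro m
  induction m with
  | zero => intro f g h; exact h [] rfl
  | succ m ih =>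
    intro f g h
    apply Finset.sum_le_sum
    intro W _
    apply mul_le_mul_of_nonneg_left _ (mu_nonneg h0 h1 W)
    exact ih _ _ (fun ws hws => h (W :: ws) (by simp [hws]))

lemma EL_const_add {σ : ℝ} (c : ℝ) :
    ∀ (m : ℕ) (f : List (Finset X) → ℝ),
      EL σ m (fun ws => c + f ws) = c + EL σ m f := by
  intro m
  induction m with
  | zero => intro f; rfl
  | succ m ih =>
    intro f
    show ∑ W : Finset X, mu σ W * EL σ m (fun ws => c + f (W :: ws))
        = c + ∑ W : Finset X, mu σ W * EL σ m (fun ws => f (W :: ws))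
    have : ∀ W : Finset X, EL σ m (fun ws => c + f (W :: ws))
        = c + EL σ m (fun ws => f (W :: ws)) := fun W => ih _
    calc ∑ W : Finset X, mu σ W * EL σ m (fun ws => c + f (W :: ws))
        = ∑ W : Finset X, (mu σ W * c + mu σ W * EL σ m (fun ws => f (W :: ws))) := by
          apply Finset.sum_congr rfl
          intro W _
          rw [this W]
          ring
      _ = (∑ W : Finset X, mu σ W * c) + ∑ W : Finset X, mu σ W * EL σ m (fun ws => f (W :: ws)) := by
          rw [Finset.sum_add_distrib]
      _ = c + ∑ W : Finset X, mu σ W * EL σ m (fun ws => f (W :: ws)) := by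
          rw [← Finset.sum_mul, sum_mu_univ, one_mul]

lemma EL_one_sub {σ : ℝ} : ∀ (m : ℕ) (f : List (Finset X) → ℝ),
    EL σ m (fun ws => 1 - f ws) = 1 - EL σ m f := by
  intro m
  induction m with
  | zero => intro f; rfl
  | succ m ih =>
    intro f
    show ∑ W : Finset X, mu σ W * EL σ m (fun ws => 1 - f (W :: ws))
        = 1 - ∑ W : Finset X, mu σ W * EL σ m (fun ws => f (W :: ws))
    calc ∑ W : Finset X, mu σ W * EL σ m (fun ws => 1 - f (W :: ws))
        = ∑ W : Finset X, (mu σ W * 1 - mu σ W * EL σ m (fun ws => f (W :: ws))) := by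
          apply Finset.sum_congr rfl
          intro W _
          rw [ih (fun ws => f (W :: ws))]
          ring
      _ = (∑ W : Finset X, mu σ W * 1) - ∑ W : Finset X, mu σ W * EL σ m (fun ws => f (W :: ws)) := by
          rw [Finset.sum_sub_distrib]
      _ = 1 - ∑ W : Finset X, mu σ W * EL σ m (fun ws => f (W :: ws)) := by
          rw [← Finset.sum_mul, sum_mu_univ, one_mul]

/-- the master recursion bound -/
lemma process_bound {σ r : ℝ} (hσ0 : 0 < σ) (hσ1 : σ ≤ 1) (hr : 0 ≤ r)
    (hy : r * (1 - σ) / σ ≤ 1/8) :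
    ∀ a : ℕ, ∀ M : Finset (Finset X), (∀ S ∈ M, S.card ≤ a) →
      EL σ (halves a).length (fun ws => wt r (proc M (halves a) ws).2)
        ≤ if a = 0 then 0 else 1/8 + (3/28) * (1 - ((1:ℝ)/2)^(a/2)) := by
  have hy0 : 0 ≤ r * (1 - σ) / σ := by
    apply div_nonneg (mul_nonneg hr (by linarith)) (le_of_lt hσ0)
  intro a
  induction a using Nat.strong_induction_on with
  | _ a ih =>
    intro M hM
    rcases a with _ | a'
    · rw [if_pos rfl]
      show EL σ (halves 0).length (fun ws => wt r (proc M (halves 0) ws).2) ≤ 0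
      have h0 : halves 0 = [] := by rw [halves]
      rw [h0]
      show wt r (proc M [] []).2 ≤ 0
      rw [proc_nil]
      simp [wt]
    · set a := a' + 1 with hadef
      rw [if_neg (by omega)]
      set b := a / 2 with hbdef
      have hblt : b < a := Nat.div_lt_self (Nat.succ_pos a') one_lt_two
      have hha : halves a = b :: halves b := halves_succ a'
      rw [hha]
      rw [List.length_cons]
      show ∑ W : Finset X, mu σ W *
          EL σ (halves b).length (fun ws => wt r (proc M (b :: halves b) (W :: ws)).2)
        ≤ 1/8 + (3/28) * (1 - ((1:ℝ)/2)^b)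
      set Bb : ℝ := if b = 0 then 0 else 1/8 + (3/28) * (1 - ((1:ℝ)/2)^(b/2)) with hBb
      have step_ineq : ∀ W : Finset X,
          EL σ (halves b).length (fun ws => wt r (proc M (b :: halves b) (W :: ws)).2)
            ≤ wt r (stepD M b W) + Bb := by
        intro W
        have hpointwise : ∀ ws : List (Finset X),
            wt r (proc M (b :: halves b) (W :: ws)).2
              ≤ wt r (stepD M b W) + wt r (proc (stepK M b W) (halves b) ws).2 := by
          intro ws
          rw [proc_cons]
          exact wt_union_le hr _ _
        calc EL σ (halves b).length (fun ws => wt r (proc M (b :: halves b) (W :: ws)).2)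
            ≤ EL σ (halves b).length (fun ws =>
                wt r (stepD M b W) + wt r (proc (stepK M b W) (halves b) ws).2) :=
              EL_mono (le_of_lt hσ0) hσ1 _ _ _ hpointwise
          _ = wt r (stepD M b W)
              + EL σ (halves b).length (fun ws => wt r (proc (stepK M b W) (halves b) ws).2) :=
              EL_const_add _ _ _
          _ ≤ wt r (stepD M b W) + Bb := by
              have := ih b hblt (stepK M b W) (fun S hS => stepK_card hS)
              linarith
      calc ∑ W : Finset X, mu σ W *
            EL σ (halves b).length (fun ws => wt r (proc M (b :: halves b) (W :: ws)).2)
          ≤ ∑ W : Finset X, mu σ W * (wt r (stepD M b W) + Bb) := by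
            apply Finset.sum_le_sum
            intro W _
            exact mul_le_mul_of_nonneg_left (step_ineq W) (mu_nonneg (le_of_lt hσ0) hσ1 W)
        _ = (∑ W : Finset X, mu σ W * wt r (stepD M b W)) + Bb := by
            have e0 : ∀ W : Finset X, mu σ W * (wt r (stepD M b W) + Bb)
                = mu σ W * wt r (stepD M b W) + mu σ W * Bb := fun W => by ring
            rw [Finset.sum_congr rfl fun W _ => e0 W, Finset.sum_add_distrib,
              ← Finset.sum_mul, sum_mu_univ, one_mul]
        _ ≤ (if a = 1 then (1:ℝ)/8 else (3/28) * ((1:ℝ)/2)^b) + Bb := by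
            have h1 := round_bound (M := M) (a := a) (b := b) hM hσ0 hσ1 hr
            have h2 := round_tail_bound hy0 hy (a := a) (by omega)
            rw [← hbdef] at h2
            linarith
        _ ≤ 1/8 + (3/28) * (1 - ((1:ℝ)/2)^b) := by
            by_cases ha1 : a = 1
            · have hb0 : b = 0 := by omega
              rw [if_pos ha1, hBb, if_pos hb0, hb0]
              norm_num
            · have hb1 : 1 ≤ b := by omega
              rw [if_neg ha1, hBb, if_neg (by omega)]
              have key : ((1:ℝ)/2)^b + ((1:ℝ)/2)^b ≤ ((1:ℝ)/2)^(b/2) := by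
                have e1 : ((1:ℝ)/2)^b + ((1:ℝ)/2)^b = ((1:ℝ)/2)^(b-1) := by
                  have : b = (b-1) + 1 := by omega
                  rw [this]
                  rw [pow_succ]
                  ring_nf
                  congr 1
                  omega
                rw [e1]
                apply pow_le_pow_of_le_one (by norm_num) (by norm_num)
                omega
              nlinarith [key]
      done

end BPP


namespace BPP
variable {X : Type*} [Fintype X] [DecidableEq X]

lemma EL_smul {σ : ℝ} (c : ℝ) : ∀ (m : ℕ) (f : List (Finset X) → ℝ),
    EL σ m (fun ws => c * f ws) = c * EL σ m f := by
  intro m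
  induction m with
  | zero => intro f; rfl
  | succ m ih =>
    intro f
    show ∑ W : Finset X, mu σ W * EL σ m (fun ws => c * f (W :: ws))
        = c * ∑ W : Finset X, mu σ W * EL σ m (fun ws => f (W :: ws))
    rw [Finset.mul_sum]
    apply Finset.sum_congr rfl
    intro W _
    rw [ih (fun ws => f (W :: ws))]
    ring

lemma minimalsF_eq_mins (F : Finset (Finset X)) : minimalsF F = mins F := rfl

lemma muF_zero {F : Finset (Finset X)} (hempty : (∅ : Finset X) ∉ F) : muF 0 F = 0 := by
  rw [muF]
  apply Finset.sum_eq_zero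
  intro S hS
  have hSne : S.card ≠ 0 := by
    intro h
    exact hempty (Finset.card_eq_zero.mp h ▸ hS)
  unfold mu
  rw [zero_pow hSne, zero_mul]

lemma muF_one {F : Finset (Finset X)} (huniv : Finset.univ ∈ F) : muF 1 F = 1 := by
  rw [muF]
  rw [Finset.sum_eq_single Finset.univ]
  · unfold mu
    rw [Finset.card_univ, Nat.sub_self, pow_zero, one_pow, one_mul]
  · intro S _ hSne
    unfold mu
    have hlt : S.card < Fintype.card X := by
      rw [← Finset.card_univ]
      exact Finset.card_lt_card (Finset.ssubset_univ_iff.mpr hSne)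
    have : (1:ℝ) - 1 = 0 := by ring
    rw [this, zero_pow (by omega), mul_zero]
  · intro h
    exact absurd huniv h

end BPP

open BPP

/-- **Bell's Park–Pham theorem with optimal constant.** For every nonempty finite set `X` and
every nontrivial upper set `F ⊆ 2^X`, `q(F) ≤ p_c(F) ≤ 8 · q(F) · log₂ (2 ℓ₀(F))`, where
`p_c(F)` is the (unique) `p ∈ [0,1]` with `μ_p(F) = 1/2`. -/
theorem bell_park_pham (X : Type) [Fintype X] [DecidableEq X] [Nonempty X]
    (F : Finset (Finset X)) (hup : IsUpperFam F) (hne : F ≠ ∅) (hnt : F ≠ Finset.univ)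
    (pc : ℝ) (hpc : pc ∈ Set.Icc (0 : ℝ) 1) (hcrit : muF pc F = 1 / 2) :
    qThr F ≤ pc ∧ pc ≤ 8 * qThr F * Real.logb 2 (2 * (ell0 F : ℝ)) := by
  classical
  -- basic structure facts
  have hFne : F.Nonempty := Finset.nonempty_iff_ne_empty.mpr hne
  have huniv : Finset.univ ∈ F := by
    obtain ⟨S, hS⟩ := hFne
    exact hup S hS Finset.univ (Finset.subset_univ S)
  have hempty : (∅ : Finset X) ∉ F := by
    intro h
    apply hnt
    apply Finset.eq_univ_iff_forall.mpr
    intro S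
    exact hup ∅ h S (Finset.empty_subset S)
  have hminsub : minimalsF F ⊆ F := Finset.filter_subset _ _
  have hcovmins : IsCover (minimalsF F) F := by
    intro S hS
    rw [minimalsF_eq_mins]
    exact exists_min S hS
  set k := ell0 F with hk
  have hMk : ∀ S ∈ minimalsF F, S.card ≤ k := fun S hS => Finset.le_sup hS
  have hk1 : 1 ≤ k := by
    obtain ⟨S₀, hS₀, _⟩ := exists_min (H := F) Finset.univ huniv
    have hS₀F : S₀ ∈ F := hminsub (by rw [minimalsF_eq_mins]; exact hS₀)
    have hS₀ne : S₀ ≠ ∅ := fun h => hempty (h ▸ hS₀F)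
    have : 1 ≤ S₀.card := Finset.card_pos.mpr (Finset.nonempty_iff_ne_empty.mpr hS₀ne)
    calc 1 ≤ S₀.card := this
      _ ≤ k := Finset.le_sup (by rw [minimalsF_eq_mins] at *; exact hS₀)
  -- the set of small densities
  set Q : Set ℝ := {p : ℝ | p ∈ Set.Icc (0 : ℝ) 1 ∧ PSmall p F} with hQdef
  have hQ0 : (0:ℝ) ∈ Q := by
    refine ⟨⟨le_refl 0, zero_le_one⟩, ⟨minimalsF F, hcovmins, ?_⟩⟩
    have : ∀ T ∈ minimalsF F, (0:ℝ) ^ T.card = 0 := by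
      intro T hT
      have hTne : T.card ≠ 0 := by
        intro h
        exact hempty (Finset.card_eq_zero.mp h ▸ hminsub hT)
      exact zero_pow hTne
    rw [Finset.sum_congr rfl this]
    simp
  have hQbdd : BddAbove Q := ⟨1, fun p hp => hp.1.2⟩
  have hq0 : 0 ≤ qThr F := le_csSup hQbdd hQ0
  have hpc0 : 0 < pc := by
    rcases lt_or_eq_of_le hpc.1 with h | h
    · exact h
    · exfalso
      rw [← h] at hcrit
      rw [muF_zero hempty] at hcrit
      norm_num at hcrit
  have hpc1 : pc < 1 := by
    rcases lt_or_eq_of_le hpc.2 with h | h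
    · exact h
    · exfalso
      rw [h, muF_one huniv] at hcrit
      norm_num at hcrit
  -- PART ONE : qThr F ≤ pc
  have part1 : qThr F ≤ pc := by
    apply csSup_le ⟨0, hQ0⟩
    intro p hp
    by_contra hlt
    push_neg at hlt
    obtain ⟨G, hGcov, hGsum⟩ := hp.2
    have h1 : muF p F ≤ 1/2 := (muF_le_cover hp.1.1 hp.1.2 hGcov).trans hGsum
    have h2 : muF pc F < muF p F := muF_strict hup hpc0 hlt hp.1.2 ∅ hempty huniv
    rw [hcrit] at h2
    linarith
  refine ⟨part1, ?_⟩
  -- PART TWO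
  have hk2R : (2:ℝ) ≤ 2 * (k:ℝ) := by
    have : (1:ℝ) ≤ (k:ℝ) := by exact_mod_cast hk1
    linarith
  have hL1 : (1:ℝ) ≤ Real.logb 2 (2 * (k:ℝ)) := by
    have h2 : Real.logb 2 2 = 1 := Real.logb_self_eq_one one_lt_two
    rw [← h2]
    exact (Real.logb_le_logb one_lt_two (by norm_num) (by linarith)).mpr hk2R
  set L := Real.logb 2 (2 * (k:ℝ)) with hLdef
  have hL0 : 0 < L := lt_of_lt_of_le one_pos hL1
  -- main claim for every admissible r
  have main : ∀ r : ℝ, qThr F < r → r ≤ 1 → pc ≤ 8 * r * L := by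
    intro r hqr hr1
    have hr0 : 0 < r := lt_of_le_of_lt hq0 hqr
    have hnotsmall : ∀ G : Finset (Finset X), IsCover G F → 1/2 < ∑ T ∈ G, r ^ T.card := by
      intro G hGcov
      by_contra hle
      push_neg at hle
      have : r ∈ Q := ⟨⟨le_of_lt hr0, hr1⟩, ⟨G, hGcov, hle⟩⟩
      exact absurd (le_csSup hQbdd this) (not_le.mpr hqr)
    by_cases hcase : 1 < 8 * r
    · -- trivial case
      calc pc ≤ 1 := hpc.2
        _ ≤ 8 * r := le_of_lt hcase
        _ = 8 * r * 1 := by ring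
        _ ≤ 8 * r * L := by
            apply mul_le_mul_of_nonneg_left hL1 (by linarith)
    · push_neg at hcase
      set σ := 8 * r with hσdef
      have hσ0 : 0 < σ := by positivity
      have hσ1 : σ ≤ 1 := hcase
      have hy : r * (1 - σ) / σ ≤ 1/8 := by
        rw [div_le_iff₀ hσ0]
        nlinarith
      set bs := halves k with hbs
      set m := bs.length with hm
      set M₀ := minimalsF F with hM₀
      -- pointwise bound
      have hpoint : ∀ ws : List (Finset X), ws.length = m →
          1 - ind F (ws.foldr (· ∪ ·) ∅) ≤ 2 * wt r (proc M₀ bs ws).2 := by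
        intro ws hlen
        by_cases hU : ws.foldr (· ∪ ·) ∅ ∈ F
        · rw [ind, if_pos hU]
          have := wt_nonneg (le_of_lt hr0) (proc M₀ bs ws).2
          linarith
        · rw [ind, if_neg hU]
          have hlast : bs.getLast? = some 0 := halves_getLast k hk1
          have hfincard : ∀ T ∈ (proc M₀ bs ws).1, T.card ≤ 0 :=
            proc_fst_card bs ws M₀ 0 hlen hlast
          have hfinempty : (proc M₀ bs ws).1 = ∅ := by
            by_contra hne'
            obtain ⟨T, hT⟩ := Finset.nonempty_iff_ne_empty.mpr hne'
            have hT0 : T = ∅ := Finset.card_eq_zero.mp (Nat.le_zero.mp (hfincard T hT))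
            obtain ⟨S, hSM, hSsub⟩ := proc_fst_lift bs ws M₀ T hT
            rw [hT0, Finset.empty_union] at hSsub
            exact hU (hup S (hminsub hSM) _ hSsub)
          have hcov : IsCover (proc M₀ bs ws).2 F := by
            intro S hS
            obtain ⟨S₀, hS₀m, hS₀S⟩ := exists_min S hS
            have hS₀M : S₀ ∈ M₀ := by rw [hM₀, minimalsF_eq_mins]; exact hS₀m
            rcases proc_chain bs ws M₀ S₀ S₀ hS₀M (Finset.Subset.refl S₀) with
              ⟨T', hT', _⟩ | ⟨T', hT', hsub⟩
            · rw [hfinempty] at hT'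
              exact absurd hT' (Finset.notMem_empty T')
            · exact ⟨T', hT', hsub.trans hS₀S⟩
          have := hnotsmall _ hcov
          have hwt : wt r (proc M₀ bs ws).2 = ∑ T ∈ (proc M₀ bs ws).2, r ^ T.card := rfl
          rw [hwt]
          linarith
      -- expectation bounds
      have hEL2 : EL σ m (fun ws => 1 - ind F (ws.foldr (· ∪ ·) ∅))
          = 1 - muF (1 - (1 - σ)^m) F := by
        rw [EL_one_sub m (fun ws => ind F (ws.foldr (· ∪ ·) ∅))]
        rw [EL_fold σ m (ind F), sum_mu_ind]
      have hELY : EL σ m (fun ws => 2 * wt r (proc M₀ bs ws).2)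
          = 2 * EL σ m (fun ws => wt r (proc M₀ bs ws).2) :=
        EL_smul 2 m _
      have hprocb := process_bound hσ0 hσ1 (le_of_lt hr0) hy k M₀ hMk
      rw [if_neg (by omega)] at hprocb
      rw [← hbs, ← hm] at hprocb
      have hprocb' : EL σ m (fun ws => wt r (proc M₀ bs ws).2) ≤ 13/56 := by
        have hp2 : ((1:ℝ)/2)^(k/2) ≥ 0 := by positivity
        nlinarith
      have hchain : 1 - muF (1 - (1 - σ)^m) F ≤ 13/28 := by
        calc 1 - muF (1 - (1 - σ)^m) F
            = EL σ m (fun ws => 1 - ind F (ws.foldr (· ∪ ·) ∅)) := hEL2.symm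
          _ ≤ EL σ m (fun ws => 2 * wt r (proc M₀ bs ws).2) :=
              EL_mono_len (le_of_lt hσ0) hσ1 m _ _ hpoint
          _ = 2 * EL σ m (fun ws => wt r (proc M₀ bs ws).2) := hELY
          _ ≤ 2 * (13/56) := by linarith
          _ = 13/28 := by norm_num
      set π := 1 - (1 - σ)^m with hπdef
      have hπ0 : 0 ≤ π := by
        have : (1 - σ)^m ≤ 1 := pow_le_one₀ (by linarith) (by linarith)
        rw [hπdef]
        linarith
      have hmuπ : 15/28 ≤ muF π F := by
        linarith [hchain]
      -- pc ≤ π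
      have hpcπ : pc ≤ π := by
        by_contra hlt
        push_neg at hlt
        have hπ1 : π ≤ pc := le_of_lt hlt
        have := muF_mono hup hπ0 hπ1 hpc.2
        rw [hcrit] at this
        linarith
      -- π ≤ m σ ≤ 8 r L
      have hbern : π ≤ (m:ℝ) * σ := by
        have hb := one_add_mul_le_pow (a := -σ) (by linarith) m
        have : 1 + (m:ℝ) * (-σ) ≤ (1 - σ)^m := by
          rw [sub_eq_add_neg]; exact hb
        rw [hπdef]
        linarith
      have hmL : (m:ℝ) ≤ L := by
        have hnat := halves_len_pow k hk1
        have hcast : (2:ℝ)^m ≤ 2 * (k:ℝ) := by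
          have : ((2^m : ℕ) : ℝ) ≤ ((2*k : ℕ) : ℝ) := by exact_mod_cast hnat
          push_cast at this
          linarith
        have hlogm : Real.logb 2 ((2:ℝ)^m) = (m:ℝ) := by
          rw [Real.logb_pow]
          rw [Real.logb_self_eq_one one_lt_two]
          ring
        rw [← hlogm, hLdef]
        exact (Real.logb_le_logb one_lt_two (by positivity) (by linarith)).mpr hcast
      calc pc ≤ π := hpcπ
        _ ≤ (m:ℝ) * σ := hbern
        _ = 8 * r * (m:ℝ) := by rw [hσdef]; ring
        _ ≤ 8 * r * L := by
            apply mul_le_mul_of_nonneg_left hmL (by linarith)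
  -- limit argument
  by_contra hgt
  push_neg at hgt
  have hq_lt : qThr F < pc / (8 * L) := by
    rw [lt_div_iff₀ (by positivity)]
    nlinarith
  set r := min 1 ((qThr F + pc / (8 * L)) / 2) with hrdef
  have hq1 : qThr F < 1 := lt_of_le_of_lt part1 hpc1
  have hr_gt : qThr F < r := by
    apply lt_min hq1
    linarith
  have hr_le1 : r ≤ 1 := min_le_left _ _
  have hr_ltd : r < pc / (8 * L) := by
    calc r ≤ (qThr F + pc / (8 * L)) / 2 := min_le_right _ _
      _ < pc / (8 * L) := by linarith
  have hfinal := main r hr_gt hr_le1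
  have : 8 * r * L < pc := by
    have h8L : (0:ℝ) < 8 * L := by positivity
    have := (mul_lt_mul_of_pos_right hr_ltd h8L)
    calc 8 * r * L = r * (8 * L) := by ring
      _ < (pc / (8 * L)) * (8 * L) := this
      _ = pc := by field_simp
  linarith
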